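/- Let (G, 𝒫, 𝒯) be an instance of Partitioned Vertex Cover with solution U, let H be the Popular Matching instance constructed from (G, 𝒫, 𝒯), and let M* be the matching in H constructed from U. Then for every P ∈ 𝒫, there is no alternating path in H_{M*} that contains at least two edges labeled +2 by label_{M*} and consists only of edges of the Pair Selector gadget associated with P; and for every T ∈ 𝒯, there is no alternating path in H_{M*} that contains at least two edges labeled +2 by label_{M*} and consists only of edges of the Triple Selector gadget associated with T. -/

import Mathlib

open SimpleGraph

universe u

/-- A matching: a set of edges of `G` that are pairwise vertex-disjoint. -/
def IsMatching {W : Type u} (G : SimpleGraph W) (M : Set (Sym2 W)) : Prop :=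
  M ⊆ G.edgeSet ∧ ∀ e ∈ M, ∀ e' ∈ M, e ≠ e' → ∀ v : W, v ∈ e → v ∉ e'

/-- `v` is matched by `M`. -/
def Matched {W : Type u} (M : Set (Sym2 W)) (v : W) : Prop := ∃ w : W, s(v, w) ∈ M

open scoped Classical in
/-- `rank G pref M v = pref v (M(v))`, with the convention `|N(v)|+1` if `v` is unmatched. -/
noncomputable def rank {W : Type u} (G : SimpleGraph W) (pref : W → W → ℕ)
    (M : Set (Sym2 W)) (v : W) : ℕ :=
  if h : ∃ w : W, s(v, w) ∈ M then pref v h.choose else (G.neighborSet v).ncard + 1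

/-- The number of vertices preferring `M` over `M'`. -/
noncomputable def vote {W : Type u} (G : SimpleGraph W) (pref : W → W → ℕ)
    (M M' : Set (Sym2 W)) : ℕ :=
  {v : W | rank G pref M v < rank G pref M' v}.ncard

/-- A popular matching: no other matching is more popular. -/
def IsPopular {W : Type u} (G : SimpleGraph W) (pref : W → W → ℕ) (M : Set (Sym2 W)) : Prop :=
  IsMatching G M ∧
    ∀ M' : Set (Sym2 W), IsMatching G M' → vote G pref M' M ≤ vote G pref M M'

/-- Each vertex has a strict preference list: `pref v` is a bijection from the
neighborhood of `v` onto `{1, …, |N(v)|}`. -/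
def HasPref {W : Type u} (G : SimpleGraph W) (pref : W → W → ℕ) : Prop :=
  ∀ v : W, Set.BijOn (pref v) (G.neighborSet v) (Set.Icc 1 (G.neighborSet v).ncard)

/-- The edge `e ∉ M` is labeled `+2` by `label_M` (given rank function `rk`):
both endpoints prefer each other over their status in `M`. -/
def EdgePlus {W : Type u} (pref : W → W → ℕ) (rk : W → ℕ) (e : Sym2 W) : Prop :=
  ∃ x y : W, e = s(x, y) ∧ pref x y < rk x ∧ pref y x < rk y

/-- The edge `e ∉ M` is labeled `-2` by `label_M` (given rank function `rk`):
both endpoints prefer their status in `M` over each other. -/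
def EdgeMinus {W : Type u} (pref : W → W → ℕ) (rk : W → ℕ) (e : Sym2 W) : Prop :=
  ∃ x y : W, e = s(x, y) ∧ rk x < pref x y ∧ rk y < pref y x

/-- The graph `G_M`: the spanning subgraph of `G` consisting of the edges of `M`
together with the edges not labeled `-2`. -/
def GMgraph {W : Type u} (G : SimpleGraph W) (pref : W → W → ℕ) (M : Set (Sym2 W)) :
    SimpleGraph W where
  Adj x y := G.Adj x y ∧ (s(x, y) ∈ M ∨ ¬ EdgeMinus pref (rank G pref M) s(x, y))
  symm := by
    constructor
    intro x y h
    refine ⟨h.1.symm, ?_⟩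
    rw [Sym2.eq_swap]
    exact h.2
  loopless := ⟨fun x h => G.irrefl h.1⟩

/-- Consecutive edges alternate between `M` and non-`M`. -/
def altRel {W : Type u} (M : Set (Sym2 W)) (e e' : Sym2 W) : Prop := e ∈ M ↔ e' ∉ M

/-- An alternating path (with respect to `M`) in a graph `G'`. -/
def IsAltPath {W : Type u} (M : Set (Sym2 W)) {G' : SimpleGraph W} {x y : W}
    (p : G'.Walk x y) : Prop :=
  p.IsPath ∧ List.Chain' (altRel M) p.edges ∧
    (∀ e, p.edges.head? = some e → e ∉ M → ¬ Matched M x) ∧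
    (∀ e, p.edges.getLast? = some e → e ∉ M → ¬ Matched M y)

/-- An alternating cycle (with respect to `M`) in a graph `G'`:
the edges alternate cyclically between `M` and non-`M`. -/
def IsAltCycle {W : Type u} (M : Set (Sym2 W)) {G' : SimpleGraph W} {x : W}
    (p : G'.Walk x x) : Prop :=
  p.IsCycle ∧ List.Chain' (altRel M) (p.edges ++ p.edges.take 1)

/-- `l` contains at least one edge labeled `+2`. -/
def OnePlusEdge {W : Type u} (pref : W → W → ℕ) (rk : W → ℕ) (l : List (Sym2 W)) : Prop :=
  ∃ e ∈ l, EdgePlus pref rk e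

/-- `l` contains at least two edges labeled `+2`. -/
def TwoPlusEdges {W : Type u} (pref : W → W → ℕ) (rk : W → ℕ) (l : List (Sym2 W)) : Prop :=
  ∃ e ∈ l, ∃ e' ∈ l, e ≠ e' ∧ EdgePlus pref rk e ∧ EdgePlus pref rk e'

/-- A vertex cover. -/
def IsVC {V : Type u} (G : SimpleGraph V) (U : Set V) : Prop :=
  ∀ ⦃x y : V⦄, G.Adj x y → x ∈ U ∨ y ∈ U
/-- An instance of Partitioned Vertex Cover: `G` is a finite simple graph, `P` is a
collection of pairwise disjoint edges of `G`, `T` is a collection of pairwise disjoint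
3-element vertex sets each inducing a triangle in `G`, and every vertex of `G` lies in
exactly one member of `P ∪ T`. -/
def IsPVC {V : Type u} (G : SimpleGraph V) (P : Set (Sym2 V)) (T : Set (Finset V)) : Prop :=
  Finite V ∧
  P ⊆ G.edgeSet ∧
  (∀ e ∈ P, ∀ e' ∈ P, e ≠ e' → ∀ v : V, v ∈ e → v ∉ e') ∧
  (∀ t ∈ T, t.card = 3) ∧
  (∀ t ∈ T, ∀ x ∈ t, ∀ y ∈ t, x ≠ y → G.Adj x y) ∧
  (∀ t ∈ T, ∀ t' ∈ T, t ≠ t' → ∀ v : V, v ∈ t → v ∉ t') ∧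
  (∀ v : V, (∃ e ∈ P, v ∈ e) ∨ (∃ t ∈ T, v ∈ t)) ∧
  (∀ v : V, ¬ ((∃ e ∈ P, v ∈ e) ∧ (∃ t ∈ T, v ∈ t)))

/-- A solution of a Partitioned Vertex Cover instance: a vertex cover `U` with
`|U ∩ P| = 1` for every pair `P` and `|U ∩ T| = 2` for every triple `T`. -/
def IsPVCSolution {V : Type u} (G : SimpleGraph V) (P : Set (Sym2 V)) (T : Set (Finset V))
    (U : Set V) : Prop :=
  IsVC G U ∧
  (∀ e ∈ P, {x : V | x ∈ e ∧ x ∈ U}.ncard = 1) ∧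
  (∀ t ∈ T, {x : V | x ∈ t ∧ x ∈ U}.ncard = 2)

/-- The vertices of the graph `H` built from a Partitioned Vertex Cover instance:
`a i`, `b i`, `c i`, `d i` for a vertex `i` of `G`; `u i j` is the vertex `u^e_i` for the
edge `e = {i,j}` of `G`; `f i j` is the vertex `f_{ij}` for the pair `{i,j} ∈ P`. -/
inductive Gad (V : Type u) : Type u where
  | a : V → Gad V
  | b : V → Gad V
  | c : V → Gad V
  | d : V → Gad V
  | u : V → V → Gad V
  | f : V → V → Gad V
deriving DecidableEq

/-- Which formal gadget vertices are really vertices of `H`. -/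
def Gad.valid {V : Type u} (G : SimpleGraph V) (P : Set (Sym2 V)) : Gad V → Prop
  | .u i j => G.Adj i j
  | .f i j => s(i, j) ∈ P
  | _ => True

/-- The edges of `H`, up to symmetry. -/
inductive HBase {V : Type u} (G : SimpleGraph V) (P : Set (Sym2 V)) (T : Set (Finset V)) :
    Gad V → Gad V → Prop where
  | da (i : V) : HBase G P T (.d i) (.a i)
  | ab (i : V) : HBase G P T (.a i) (.b i)
  | ac (i : V) : HBase G P T (.a i) (.c i)
  | bc (i : V) : HBase G P T (.b i) (.c i)
  | uu {i j : V} (h : G.Adj i j) : HBase G P T (.u i j) (.u j i)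
  | bu {i j : V} (h : G.Adj i j) : HBase G P T (.b i) (.u i j)
  | df {i j : V} (h : s(i, j) ∈ P) : HBase G P T (.d i) (.f i j)
  | fc {i j : V} (h : s(i, j) ∈ P) : HBase G P T (.f i j) (.c j)
  | cd {i j : V} (h : s(i, j) ∈ P) : HBase G P T (.c i) (.d j)
  | dd {i j : V} {t : Finset V} (ht : t ∈ T) (hi : i ∈ t) (hj : j ∈ t) (hne : i ≠ j) :
      HBase G P T (.d i) (.d j)
  | cc {i j : V} {t : Finset V} (ht : t ∈ T) (hi : i ∈ t) (hj : j ∈ t) (hne : i ≠ j) :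
      HBase G P T (.c i) (.c j)

/-- The graph `H` of the Popular Matching instance built from `(G, P, T)`. -/
def Hgraph {V : Type u} (G : SimpleGraph V) (P : Set (Sym2 V)) (T : Set (Finset V)) :
    SimpleGraph {g : Gad V // Gad.valid G P g} where
  Adj x y := x ≠ y ∧ (HBase G P T x.1 y.1 ∨ HBase G P T y.1 x.1)
  symm := ⟨fun _ _ h => ⟨h.1.symm, h.2.symm⟩⟩
  loopless := ⟨fun _ h => h.1 rfl⟩

/-- The Popular Matching instance (graph together with preference lists) constructed
from a Partitioned Vertex Cover instance `(G, P, T)`.  The field `pref` gives the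
preference lists; all its values on the neighborhoods in `H` are pinned down, except
the ranks that `b i` assigns to the vertices `u^e_i`, which form an arbitrary fixed
bijection onto `{2, …, deg_G(i) + 1}`. -/
structure Reduction (V : Type u) [LinearOrder V] : Type u where
  G : SimpleGraph V
  P : Set (Sym2 V)
  T : Set (Finset V)
  ispvc : IsPVC G P T
  pref : Gad V → Gad V → ℕ
  pref_ab : ∀ i : V, pref (.a i) (.b i) = 1
  pref_ac : ∀ i : V, pref (.a i) (.c i) = 2
  pref_ad : ∀ i : V, pref (.a i) (.d i) = 3
  pref_ba : ∀ i : V, pref (.b i) (.a i) = 1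
  pref_bu : ∀ i : V, Set.BijOn (pref (.b i)) {g : Gad V | ∃ j : V, G.Adj i j ∧ g = .u i j}
      (Set.Icc 2 ((G.neighborSet i).ncard + 1))
  pref_bc : ∀ i : V, pref (.b i) (.c i) = (G.neighborSet i).ncard + 2
  pref_ca : ∀ i : V, pref (.c i) (.a i) = 1
  pref_cb : ∀ i : V, pref (.c i) (.b i) = 2
  pref_da : ∀ i : V, pref (.d i) (.a i) = 1
  pref_uu : ∀ i j : V, G.Adj i j → pref (.u i j) (.u j i) = 1
  pref_ub : ∀ i j : V, G.Adj i j → pref (.u i j) (.b i) = 2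
  pref_cf : ∀ i j : V, s(i, j) ∈ P → pref (.c i) (.f j i) = 3
  pref_cd : ∀ i j : V, s(i, j) ∈ P → pref (.c i) (.d j) = 4
  pref_dc : ∀ i j : V, s(i, j) ∈ P → pref (.d i) (.c j) = 2
  pref_df : ∀ i j : V, s(i, j) ∈ P → pref (.d i) (.f i j) = 3
  pref_fd : ∀ i j : V, s(i, j) ∈ P → pref (.f i j) (.d i) = 1
  pref_fc : ∀ i j : V, s(i, j) ∈ P → pref (.f i j) (.c j) = 2
  pref_tri : ∀ t ∈ T, ∀ i j k : V, t = {i, j, k} → i < j → j < k →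
    pref (.c i) (.c k) = 3 ∧ pref (.c i) (.c j) = 4 ∧
    pref (.c j) (.c i) = 3 ∧ pref (.c j) (.c k) = 4 ∧
    pref (.c k) (.c j) = 3 ∧ pref (.c k) (.c i) = 4 ∧
    pref (.d i) (.d j) = 2 ∧ pref (.d i) (.d k) = 3 ∧
    pref (.d j) (.d k) = 2 ∧ pref (.d j) (.d i) = 3 ∧
    pref (.d k) (.d i) = 2 ∧ pref (.d k) (.d j) = 3

namespace Reduction

variable {V : Type u} [LinearOrder V] (R : Reduction V)

/-- The vertex set of `H`. -/
abbrev HV : Type u := {g : Gad V // Gad.valid R.G R.P g}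

/-- The graph `H`. -/
def H : SimpleGraph R.HV := Hgraph R.G R.P R.T

/-- The preference lists of `H`, as a function on its vertices. -/
def prefH : R.HV → R.HV → ℕ := fun x y => R.pref x.1 y.1

/-- The vertex `a_i` of `H`. -/
def va (i : V) : R.HV := ⟨.a i, trivial⟩
/-- The vertex `b_i` of `H`. -/
def vb (i : V) : R.HV := ⟨.b i, trivial⟩
/-- The vertex `c_i` of `H`. -/
def vc (i : V) : R.HV := ⟨.c i, trivial⟩
/-- The vertex `d_i` of `H`. -/
def vd (i : V) : R.HV := ⟨.d i, trivial⟩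
/-- The vertex `u^e_i` of `H`, for an edge `e = {i,j}` of `G`. -/
def vu (i j : V) (h : R.G.Adj i j) : R.HV := ⟨.u i j, h⟩
/-- The vertex `f_{ij}` of `H`, for a pair `{i,j} ∈ P`. -/
def vf (i j : V) (h : s(i, j) ∈ R.P) : R.HV := ⟨.f i j, h⟩

/-- The matching `M*` in `H` constructed from a solution `U`. -/
def Mstar (U : Set V) : Set (Sym2 R.HV) :=
  {e : Sym2 R.HV |
    (∃ (i j : V) (h : R.G.Adj i j), e = s(R.vu i j h, R.vu j i h.symm)) ∨
    (∃ (x y : V) (h : s(x, y) ∈ R.P) (h' : s(y, x) ∈ R.P), x ∉ U ∧ y ∈ U ∧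
      (e = s(R.va x, R.vd x) ∨ e = s(R.vb x, R.vc x) ∨ e = s(R.va y, R.vb y) ∨
       e = s(R.vf x y h, R.vc y) ∨ e = s(R.vf y x h', R.vd y))) ∨
    (∃ t ∈ R.T, ∃ x y z : V, t = {x, y, z} ∧ x ∉ U ∧ y ∈ U ∧ z ∈ U ∧ y ≠ z ∧
      R.pref (.d x) (.d y) < R.pref (.d x) (.d z) ∧
      (e = s(R.va x, R.vd x) ∨ e = s(R.vb x, R.vc x) ∨ e = s(R.va y, R.vb y) ∨
       e = s(R.va z, R.vb z) ∨ e = s(R.vc y, R.vc z) ∨ e = s(R.vd y, R.vd z)))}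

end Reduction

namespace Reduction

variable {V : Type u} [LinearOrder V] {R : Reduction V} {U : Set V}

lemma sym2_cases {v w p q : R.HV} (h : s(v,w) = s(p,q)) : (v = p ∧ w = q) ∨ (v = q ∧ w = p) :=
  Sym2.eq_iff.mp h

lemma excl (R : Reduction V) {t : Finset V} (ht : t ∈ R.T) {y : V} (hyt : y ∈ t) {p : V}
    (h : s(p, y) ∈ R.P ∨ s(y, p) ∈ R.P) : False := by
  refine R.ispvc.2.2.2.2.2.2.2 y ⟨?_, t, ht, hyt⟩
  rcases h with h|h
  · exact ⟨_, h, Sym2.mem_mk_right p y⟩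
  · exact ⟨_, h, Sym2.mem_mk_left y p⟩

lemma triple_eq (R : Reduction V) {t t' : Finset V} (ht : t ∈ R.T) (ht' : t' ∈ R.T) {y : V}
    (hyt : y ∈ t) (hyt' : y ∈ t') : t = t' := by
  by_contra hne
  exact R.ispvc.2.2.2.2.2.1 t ht t' ht' hne y hyt hyt'

lemma u1 {x : V} (hx : x ∉ U) {w : R.HV} (h : s(R.va x, w) ∈ R.Mstar U) : w = R.vd x := by
  rcases h with ⟨i,j,hij,h⟩ | ⟨p,q,h1,h2,hp,hq,h|h|h|h|h⟩ |
    ⟨t,ht,p,q,r,ht2,hp,hq,hr,hqr,hord,h|h|h|h|h|h⟩ <;>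
  · rcases sym2_cases h with ⟨h1',h2'⟩|⟨h1',h2'⟩ <;>
      simp_all [va,vb,vc,vd,vu,vf, Subtype.ext_iff]

lemma u2 {x : V} (hx : x ∉ U) {w : R.HV} (h : s(R.vc x, w) ∈ R.Mstar U) : w = R.vb x := by
  rcases h with ⟨i,j,hij,h⟩ | ⟨p,q,h1,h2,hp,hq,h|h|h|h|h⟩ |
    ⟨t,ht,p,q,r,ht2,hp,hq,hr,hqr,hord,h|h|h|h|h|h⟩ <;>
  · rcases sym2_cases h with ⟨h1',h2'⟩|⟨h1',h2'⟩ <;>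
      simp_all [va,vb,vc,vd,vu,vf, Subtype.ext_iff]

lemma u3 {y : V} (hy : y ∈ U) {w : R.HV} (h : s(R.va y, w) ∈ R.Mstar U) : w = R.vb y := by
  rcases h with ⟨i,j,hij,h⟩ | ⟨p,q,h1,h2,hp,hq,h|h|h|h|h⟩ |
    ⟨t,ht,p,q,r,ht2,hp,hq,hr,hqr,hord,h|h|h|h|h|h⟩ <;>
  · rcases sym2_cases h with ⟨h1',h2'⟩|⟨h1',h2'⟩ <;>
      simp_all [va,vb,vc,vd,vu,vf, Subtype.ext_iff]

lemma u4 {y : V} (hy : y ∈ U) {w : R.HV} (h : s(R.vb y, w) ∈ R.Mstar U) : w = R.va y := by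
  rcases h with ⟨i,j,hij,h⟩ | ⟨p,q,h1,h2,hp,hq,h|h|h|h|h⟩ |
    ⟨t,ht,p,q,r,ht2,hp,hq,hr,hqr,hord,h|h|h|h|h|h⟩ <;>
  · rcases sym2_cases h with ⟨h1',h2'⟩|⟨h1',h2'⟩ <;>
      simp_all [va,vb,vc,vd,vu,vf, Subtype.ext_iff]

lemma u7 {x : V} (hx : x ∉ U) {w : R.HV} (h : s(R.vd x, w) ∈ R.Mstar U) : w = R.va x := by
  rcases h with ⟨i,j,hij,h⟩ | ⟨p,q,h1,h2,hp,hq,h|h|h|h|h⟩ |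
    ⟨t,ht,p,q,r,ht2,hp,hq,hr,hqr,hord,h|h|h|h|h|h⟩ <;>
  · rcases sym2_cases h with ⟨h1',h2'⟩|⟨h1',h2'⟩ <;>
      simp_all [va,vb,vc,vd,vu,vf, Subtype.ext_iff]

lemma u5 {i j : V} (hi : i ∉ U) (hij : s(i,j) ∈ R.P) {w : R.HV}
    (h : s(R.vf i j hij, w) ∈ R.Mstar U) : w = R.vc j := by
  rcases h with ⟨p',q',hij',h⟩ | ⟨p,q,h1,h2,hp,hq,h|h|h|h|h⟩ |
    ⟨t,ht,p,q,r,ht2,hp,hq,hr,hqr,hord,h|h|h|h|h|h⟩ <;>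
  · rcases sym2_cases h with ⟨h1',h2'⟩|⟨h1',h2'⟩ <;>
      simp_all [va,vb,vc,vd,vu,vf, Subtype.ext_iff]

lemma u6 {i j : V} (hj : j ∈ U) (hji : s(j,i) ∈ R.P) {w : R.HV}
    (h : s(R.vf j i hji, w) ∈ R.Mstar U) : w = R.vd j := by
  rcases h with ⟨p',q',hij',h⟩ | ⟨p,q,h1,h2,hp,hq,h|h|h|h|h⟩ |
    ⟨t,ht,p,q,r,ht2,hp,hq,hr,hqr,hord,h|h|h|h|h|h⟩ <;>
  · rcases sym2_cases h with ⟨h1',h2'⟩|⟨h1',h2'⟩ <;>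
      simp_all [va,vb,vc,vd,vu,vf, Subtype.ext_iff]
lemma u8 {t : Finset V} (ht : t ∈ R.T) {x y z : V} (ht2 : t = {x,y,z}) (hx : x ∉ U)
    (hy : y ∈ U) (hz : z ∈ U) {w : R.HV}
    (h : s(R.vc y, w) ∈ R.Mstar U) : w = R.vc z := by
  rcases h with ⟨i,j,hij,h⟩ | ⟨p,q,h1,h2,hp,hq,h|h|h|h|h⟩ |
    ⟨t',ht',p,q,r,ht2',hp,hq,hr,hqr,hord,h|h|h|h|h|h⟩
  · rcases sym2_cases h with ⟨h1',h2'⟩|⟨h1',h2'⟩ <;>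
      simp_all [va,vb,vc,vd,vu,vf, Subtype.ext_iff]
  · rcases sym2_cases h with ⟨h1',h2'⟩|⟨h1',h2'⟩ <;>
      simp_all [va,vb,vc,vd,vu,vf, Subtype.ext_iff]
  · rcases sym2_cases h with ⟨h1',h2'⟩|⟨h1',h2'⟩ <;>
      simp_all [va,vb,vc,vd,vu,vf, Subtype.ext_iff]
  · rcases sym2_cases h with ⟨h1',h2'⟩|⟨h1',h2'⟩ <;>
      simp_all [va,vb,vc,vd,vu,vf, Subtype.ext_iff]
  · -- pair form 4 : s(vf p q, vc q)
    rcases sym2_cases h with ⟨h1',h2'⟩|⟨h1',h2'⟩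
    · simp [vc,vf, Subtype.ext_iff] at h1'
    · have hq' : y = q := by simpa [vc, Subtype.ext_iff] using h1'
      subst hq'
      exact (R.excl ht (by simp [ht2]) (Or.inl h1)).elim
  · rcases sym2_cases h with ⟨h1',h2'⟩|⟨h1',h2'⟩ <;>
      simp_all [va,vb,vc,vd,vu,vf, Subtype.ext_iff]
  · rcases sym2_cases h with ⟨h1',h2'⟩|⟨h1',h2'⟩ <;>
      simp_all [va,vb,vc,vd,vu,vf, Subtype.ext_iff]
  · rcases sym2_cases h with ⟨h1',h2'⟩|⟨h1',h2'⟩ <;>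
      simp_all [va,vb,vc,vd,vu,vf, Subtype.ext_iff]
  · rcases sym2_cases h with ⟨h1',h2'⟩|⟨h1',h2'⟩ <;>
      simp_all [va,vb,vc,vd,vu,vf, Subtype.ext_iff]
  · rcases sym2_cases h with ⟨h1',h2'⟩|⟨h1',h2'⟩ <;>
      simp_all [va,vb,vc,vd,vu,vf, Subtype.ext_iff]
  · -- triple form 5 : s(vc q, vc r)
    rcases sym2_cases h with ⟨h1',h2'⟩|⟨h1',h2'⟩
    · have hq' : y = q := by simpa [vc, Subtype.ext_iff] using h1'
      subst hq'
      have teq : t = t' := R.triple_eq (y := y) ht ht' (by simp [ht2]) (by simp [ht2'])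
      have hrt : r = x ∨ r = y ∨ r = z := by
        have hmem : r ∈ t := by rw [teq, ht2']; simp
        rw [ht2] at hmem; simpa using hmem
      rcases hrt with rfl|rfl|rfl
      · exact (hx hr).elim
      · exact (hqr rfl).elim
      · exact h2'
    · have hr' : y = r := by simpa [vc, Subtype.ext_iff] using h1'
      subst hr'
      have teq : t = t' := R.triple_eq (y := y) ht ht' (by simp [ht2]) (by simp [ht2'])
      have hqt : q = x ∨ q = y ∨ q = z := by
        have hmem : q ∈ t := by rw [teq, ht2']; simp
        rw [ht2] at hmem; simpa using hmem
      rcases hqt with rfl|rfl|rfl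
      · exact (hx hq).elim
      · exact (hqr rfl).elim
      · exact h2'
  · rcases sym2_cases h with ⟨h1',h2'⟩|⟨h1',h2'⟩ <;>
      simp_all [va,vb,vc,vd,vu,vf, Subtype.ext_iff]

lemma u9 {t : Finset V} (ht : t ∈ R.T) {x y z : V} (ht2 : t = {x,y,z}) (hx : x ∉ U)
    (hy : y ∈ U) (hz : z ∈ U) {w : R.HV}
    (h : s(R.vd y, w) ∈ R.Mstar U) : w = R.vd z := by
  rcases h with ⟨i,j,hij,h⟩ | ⟨p,q,h1,h2,hp,hq,h|h|h|h|h⟩ |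
    ⟨t',ht',p,q,r,ht2',hp,hq,hr,hqr,hord,h|h|h|h|h|h⟩
  · rcases sym2_cases h with ⟨h1',h2'⟩|⟨h1',h2'⟩ <;>
      simp_all [va,vb,vc,vd,vu,vf, Subtype.ext_iff]
  · rcases sym2_cases h with ⟨h1',h2'⟩|⟨h1',h2'⟩ <;>
      simp_all [va,vb,vc,vd,vu,vf, Subtype.ext_iff]
  · rcases sym2_cases h with ⟨h1',h2'⟩|⟨h1',h2'⟩ <;>
      simp_all [va,vb,vc,vd,vu,vf, Subtype.ext_iff]
  · rcases sym2_cases h with ⟨h1',h2'⟩|⟨h1',h2'⟩ <;>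
      simp_all [va,vb,vc,vd,vu,vf, Subtype.ext_iff]
  · rcases sym2_cases h with ⟨h1',h2'⟩|⟨h1',h2'⟩ <;>
      simp_all [va,vb,vc,vd,vu,vf, Subtype.ext_iff]
  · -- pair form 5 : s(vf q p, vd q)
    rcases sym2_cases h with ⟨h1',h2'⟩|⟨h1',h2'⟩
    · simp [vd,vf, Subtype.ext_iff] at h1'
    · have hq' : y = q := by simpa [vd, Subtype.ext_iff] using h1'
      subst hq'
      exact (R.excl ht (by simp [ht2]) (Or.inr h2)).elim
  · rcases sym2_cases h with ⟨h1',h2'⟩|⟨h1',h2'⟩ <;>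
      simp_all [va,vb,vc,vd,vu,vf, Subtype.ext_iff]
  · rcases sym2_cases h with ⟨h1',h2'⟩|⟨h1',h2'⟩ <;>
      simp_all [va,vb,vc,vd,vu,vf, Subtype.ext_iff]
  · rcases sym2_cases h with ⟨h1',h2'⟩|⟨h1',h2'⟩ <;>
      simp_all [va,vb,vc,vd,vu,vf, Subtype.ext_iff]
  · rcases sym2_cases h with ⟨h1',h2'⟩|⟨h1',h2'⟩ <;>
      simp_all [va,vb,vc,vd,vu,vf, Subtype.ext_iff]
  · rcases sym2_cases h with ⟨h1',h2'⟩|⟨h1',h2'⟩ <;>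
      simp_all [va,vb,vc,vd,vu,vf, Subtype.ext_iff]
  · -- triple form 6 : s(vd q, vd r)
    rcases sym2_cases h with ⟨h1',h2'⟩|⟨h1',h2'⟩
    · have hq' : y = q := by simpa [vd, Subtype.ext_iff] using h1'
      subst hq'
      have teq : t = t' := R.triple_eq (y := y) ht ht' (by simp [ht2]) (by simp [ht2'])
      have hrt : r = x ∨ r = y ∨ r = z := by
        have hmem : r ∈ t := by rw [teq, ht2']; simp
        rw [ht2] at hmem; simpa using hmem
      rcases hrt with rfl|rfl|rfl
      · exact (hx hr).elim
      · exact (hqr rfl).elim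
      · exact h2'
    · have hr' : y = r := by simpa [vd, Subtype.ext_iff] using h1'
      subst hr'
      have teq : t = t' := R.triple_eq (y := y) ht ht' (by simp [ht2]) (by simp [ht2'])
      have hqt : q = x ∨ q = y ∨ q = z := by
        have hmem : q ∈ t := by rw [teq, ht2']; simp
        rw [ht2] at hmem; simpa using hmem
      rcases hqt with rfl|rfl|rfl
      · exact (hx hq).elim
      · exact (hqr rfl).elim
      · exact h2'
lemma rank_eq_of {v w₀ : R.HV} (hw : s(v,w₀) ∈ R.Mstar U)
    (huniq : ∀ w, s(v,w) ∈ R.Mstar U → w = w₀) :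
    rank R.H R.prefH (R.Mstar U) v = R.prefH v w₀ := by
  have hex : ∃ w, s(v,w) ∈ R.Mstar U := ⟨w₀, hw⟩
  rw [rank, dif_pos hex, huniq _ hex.choose_spec]

lemma edgePlus_both {pref : R.HV → R.HV → ℕ} {rk : R.HV → ℕ} {u v : R.HV}
    (h : EdgePlus pref rk s(u,v)) : pref u v < rk u ∧ pref v u < rk v := by
  obtain ⟨p,q,heq,h1,h2⟩ := h
  rcases sym2_cases heq with ⟨rfl,rfl⟩|⟨rfl,rfl⟩
  · exact ⟨h1,h2⟩
  · exact ⟨h2,h1⟩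

lemma m1 {x y : V} (hP : s(x,y) ∈ R.P) (hP' : s(y,x) ∈ R.P) (hx : x ∉ U) (hy : y ∈ U) :
    s(R.va x, R.vd x) ∈ R.Mstar U ∧ s(R.vb x, R.vc x) ∈ R.Mstar U ∧
    s(R.va y, R.vb y) ∈ R.Mstar U ∧ s(R.vf x y hP, R.vc y) ∈ R.Mstar U ∧
    s(R.vf y x hP', R.vd y) ∈ R.Mstar U := by
  refine ⟨?_,?_,?_,?_,?_⟩ <;>
    exact Or.inr (Or.inl ⟨x, y, hP, hP', hx, hy, by tauto⟩)

lemma m2 {t : Finset V} (ht : t ∈ R.T) {x y z : V} (ht2 : t = {x,y,z}) (hx : x ∉ U)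
    (hy : y ∈ U) (hz : z ∈ U) (hyz : y ≠ z)
    (hord : R.pref (.d x) (.d y) < R.pref (.d x) (.d z)) :
    s(R.va x, R.vd x) ∈ R.Mstar U ∧ s(R.vb x, R.vc x) ∈ R.Mstar U ∧
    s(R.va y, R.vb y) ∈ R.Mstar U ∧ s(R.va z, R.vb z) ∈ R.Mstar U ∧
    s(R.vc y, R.vc z) ∈ R.Mstar U ∧ s(R.vd y, R.vd z) ∈ R.Mstar U := by
  refine ⟨?_,?_,?_,?_,?_,?_⟩ <;>
    exact Or.inr (Or.inr ⟨t, ht, x, y, z, ht2, hx, hy, hz, hyz, hord, by tauto⟩)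

-- ranks for a pair gadget, x ∉ U, y ∈ U
lemma rk_dx {x y : V} (hP : s(x,y) ∈ R.P) (hP' : s(y,x) ∈ R.P) (hx : x ∉ U) (hy : y ∈ U) :
    rank R.H R.prefH (R.Mstar U) (R.vd x) = 1 := by
  have := R.rank_eq_of (U := U) (v := R.vd x) (w₀ := R.va x)
    (by rw [Sym2.eq_swap]; exact (R.m1 hP hP' hx hy).1) (fun w hw => R.u7 hx hw)
  rw [this]; exact R.pref_da x

lemma rk_cx {x y : V} (hP : s(x,y) ∈ R.P) (hP' : s(y,x) ∈ R.P) (hx : x ∉ U) (hy : y ∈ U) :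
    rank R.H R.prefH (R.Mstar U) (R.vc x) = 2 := by
  have := R.rank_eq_of (U := U) (v := R.vc x) (w₀ := R.vb x)
    (by rw [Sym2.eq_swap]; exact (R.m1 hP hP' hx hy).2.1) (fun w hw => R.u2 hx hw)
  rw [this]; exact R.pref_cb x

lemma rk_ay {x y : V} (hP : s(x,y) ∈ R.P) (hP' : s(y,x) ∈ R.P) (hx : x ∉ U) (hy : y ∈ U) :
    rank R.H R.prefH (R.Mstar U) (R.va y) = 1 := by
  have := R.rank_eq_of (U := U) (v := R.va y) (w₀ := R.vb y)
    ((R.m1 hP hP' hx hy).2.2.1) (fun w hw => R.u3 hy hw)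
  rw [this]; exact R.pref_ab y

lemma rk_by {x y : V} (hP : s(x,y) ∈ R.P) (hP' : s(y,x) ∈ R.P) (hx : x ∉ U) (hy : y ∈ U) :
    rank R.H R.prefH (R.Mstar U) (R.vb y) = 1 := by
  have := R.rank_eq_of (U := U) (v := R.vb y) (w₀ := R.va y)
    (by rw [Sym2.eq_swap]; exact (R.m1 hP hP' hx hy).2.2.1) (fun w hw => R.u4 hy hw)
  rw [this]; exact R.pref_ba y

lemma rk_fxy {x y : V} (hP : s(x,y) ∈ R.P) (hP' : s(y,x) ∈ R.P) (hx : x ∉ U) (hy : y ∈ U) :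
    rank R.H R.prefH (R.Mstar U) (R.vf x y hP) = 2 := by
  have := R.rank_eq_of (U := U) (v := R.vf x y hP) (w₀ := R.vc y)
    ((R.m1 hP hP' hx hy).2.2.2.1) (fun w hw => R.u5 hx hP hw)
  rw [this]; exact R.pref_fc x y hP

lemma rk_fyx {x y : V} (hP : s(x,y) ∈ R.P) (hP' : s(y,x) ∈ R.P) (hx : x ∉ U) (hy : y ∈ U) :
    rank R.H R.prefH (R.Mstar U) (R.vf y x hP') = 1 := by
  have := R.rank_eq_of (U := U) (v := R.vf y x hP') (w₀ := R.vd y)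
    ((R.m1 hP hP' hx hy).2.2.2.2) (fun w hw => R.u6 hy hP' hw)
  rw [this]; exact R.pref_fd y x hP'

-- ranks for a triple gadget
lemma rk_dx' {t : Finset V} (ht : t ∈ R.T) {x y z : V} (ht2 : t = {x,y,z}) (hx : x ∉ U)
    (hy : y ∈ U) (hz : z ∈ U) (hyz : y ≠ z)
    (hord : R.pref (.d x) (.d y) < R.pref (.d x) (.d z)) :
    rank R.H R.prefH (R.Mstar U) (R.vd x) = 1 := by
  have := R.rank_eq_of (U := U) (v := R.vd x) (w₀ := R.va x)
    (by rw [Sym2.eq_swap]; exact (R.m2 ht ht2 hx hy hz hyz hord).1) (fun w hw => R.u7 hx hw)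
  rw [this]; exact R.pref_da x

lemma rk_cx' {t : Finset V} (ht : t ∈ R.T) {x y z : V} (ht2 : t = {x,y,z}) (hx : x ∉ U)
    (hy : y ∈ U) (hz : z ∈ U) (hyz : y ≠ z)
    (hord : R.pref (.d x) (.d y) < R.pref (.d x) (.d z)) :
    rank R.H R.prefH (R.Mstar U) (R.vc x) = 2 := by
  have := R.rank_eq_of (U := U) (v := R.vc x) (w₀ := R.vb x)
    (by rw [Sym2.eq_swap]; exact (R.m2 ht ht2 hx hy hz hyz hord).2.1) (fun w hw => R.u2 hx hw)
  rw [this]; exact R.pref_cb x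

lemma rk_ay' {t : Finset V} (ht : t ∈ R.T) {x y z : V} (ht2 : t = {x,y,z}) (hx : x ∉ U)
    (hy : y ∈ U) (hz : z ∈ U) (hyz : y ≠ z)
    (hord : R.pref (.d x) (.d y) < R.pref (.d x) (.d z)) :
    rank R.H R.prefH (R.Mstar U) (R.va y) = 1 := by
  have := R.rank_eq_of (U := U) (v := R.va y) (w₀ := R.vb y)
    ((R.m2 ht ht2 hx hy hz hyz hord).2.2.1) (fun w hw => R.u3 hy hw)
  rw [this]; exact R.pref_ab y

lemma rk_by' {t : Finset V} (ht : t ∈ R.T) {x y z : V} (ht2 : t = {x,y,z}) (hx : x ∉ U)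
    (hy : y ∈ U) (hz : z ∈ U) (hyz : y ≠ z)
    (hord : R.pref (.d x) (.d y) < R.pref (.d x) (.d z)) :
    rank R.H R.prefH (R.Mstar U) (R.vb y) = 1 := by
  have := R.rank_eq_of (U := U) (v := R.vb y) (w₀ := R.va y)
    (by rw [Sym2.eq_swap]; exact (R.m2 ht ht2 hx hy hz hyz hord).2.2.1) (fun w hw => R.u4 hy hw)
  rw [this]; exact R.pref_ba y

lemma rk_cy' {t : Finset V} (ht : t ∈ R.T) {x y z : V} (ht2 : t = {x,y,z}) (hx : x ∉ U)
    (hy : y ∈ U) (hz : z ∈ U) (hyz : y ≠ z)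
    (hord : R.pref (.d x) (.d y) < R.pref (.d x) (.d z)) :
    rank R.H R.prefH (R.Mstar U) (R.vc y) = R.pref (.c y) (.c z) := by
  exact R.rank_eq_of (U := U) (v := R.vc y) (w₀ := R.vc z)
    ((R.m2 ht ht2 hx hy hz hyz hord).2.2.2.2.1) (fun w hw => R.u8 ht ht2 hx hy hz hw)

lemma rk_dy' {t : Finset V} (ht : t ∈ R.T) {x y z : V} (ht2 : t = {x,y,z}) (hx : x ∉ U)
    (hy : y ∈ U) (hz : z ∈ U) (hyz : y ≠ z)
    (hord : R.pref (.d x) (.d y) < R.pref (.d x) (.d z)) :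
    rank R.H R.prefH (R.Mstar U) (R.vd y) = R.pref (.d y) (.d z) := by
  exact R.rank_eq_of (U := U) (v := R.vd y) (w₀ := R.vd z)
    ((R.m2 ht ht2 hx hy hz hyz hord).2.2.2.2.2) (fun w hw => R.u9 ht ht2 hx hy hz hw)

end Reduction

/-- The vertex set of the Pair Selector gadget associated with a pair `{i,j}`. -/
def pairGadget {V : Type u} (i j : V) : Set (Gad V) :=
  {g : Gad V | ∃ x : V, (x = i ∨ x = j) ∧ (g = .a x ∨ g = .b x ∨ g = .c x ∨ g = .d x)} ∪
    {Gad.f i j, Gad.f j i}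

/-- The vertex set of the Triple Selector gadget associated with a triple `t`. -/
def tripleGadget {V : Type u} (t : Finset V) : Set (Gad V) :=
  {g : Gad V | ∃ x ∈ t, g = .a x ∨ g = .b x ∨ g = .c x ∨ g = .d x}


namespace Reduction

variable {V : Type u} [LinearOrder V] {R : Reduction V} {U : Set V}

lemma ab_not_mem {x : V} (hx : x ∉ U) : s(R.va x, R.vb x) ∉ R.Mstar U := fun h => by
  have := R.u1 hx (by rw [Sym2.eq_swap] at h ⊢; exact h)
  simp [vb, vd, Subtype.ext_iff] at this

lemma ac_not_mem {x : V} (hx : x ∉ U) : s(R.va x, R.vc x) ∉ R.Mstar U := fun h => by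
  have := R.u1 hx (by rw [Sym2.eq_swap] at h ⊢; exact h)
  simp [vc, vd, Subtype.ext_iff] at this

lemma pair_classify_base {x y : V} (hP : s(x,y) ∈ R.P) (hP' : s(y,x) ∈ R.P)
    (hx : x ∉ U) (hy : y ∈ U) {gu gv : Gad V} {pu : Gad.valid R.G R.P gu}
    {pv : Gad.valid R.G R.P gv} (hb : HBase R.G R.P R.T gu gv)
    (hu : gu ∈ pairGadget x y) (hv : gv ∈ pairGadget x y)
    (hplus : EdgePlus R.prefH (rank R.H R.prefH (R.Mstar U)) s(⟨gu,pu⟩,⟨gv,pv⟩)) :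
    s((⟨gu,pu⟩ : R.HV), (⟨gv,pv⟩ : R.HV)) = s(R.va x, R.vb x) ∨
    s((⟨gu,pu⟩ : R.HV), (⟨gv,pv⟩ : R.HV)) = s(R.va x, R.vc x) := by
  have hboth := R.edgePlus_both hplus
  cases hb with
  | da i₀ =>
    exfalso
    have hcase : i₀ = x ∨ i₀ = y := by simpa [pairGadget] using hu
    rcases hcase with rfl|rfl
    · have h1 : R.prefH (R.vd i₀) (R.va i₀) < rank R.H R.prefH (R.Mstar U) (R.vd i₀) := hboth.1
      have e1 : R.prefH (R.vd i₀) (R.va i₀) = 1 := R.pref_da i₀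
      have e2 : rank R.H R.prefH (R.Mstar U) (R.vd i₀) = 1 := R.rk_dx hP hP' hx hy
      omega
    · have h1 : R.prefH (R.va i₀) (R.vd i₀) < rank R.H R.prefH (R.Mstar U) (R.va i₀) := hboth.2
      have e1 : R.prefH (R.va i₀) (R.vd i₀) = 3 := R.pref_ad i₀
      have e2 : rank R.H R.prefH (R.Mstar U) (R.va i₀) = 1 := R.rk_ay hP hP' hx hy
      omega
  | ab i₀ =>
    have hcase : i₀ = x ∨ i₀ = y := by simpa [pairGadget] using hu
    rcases hcase with rfl|rfl
    · exact Or.inl rfl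
    · exfalso
      have h1 : R.prefH (R.va i₀) (R.vb i₀) < rank R.H R.prefH (R.Mstar U) (R.va i₀) := hboth.1
      have e1 : R.prefH (R.va i₀) (R.vb i₀) = 1 := R.pref_ab i₀
      have e2 : rank R.H R.prefH (R.Mstar U) (R.va i₀) = 1 := R.rk_ay hP hP' hx hy
      omega
  | ac i₀ =>
    have hcase : i₀ = x ∨ i₀ = y := by simpa [pairGadget] using hu
    rcases hcase with rfl|rfl
    · exact Or.inr rfl
    · exfalso
      have h1 : R.prefH (R.va i₀) (R.vc i₀) < rank R.H R.prefH (R.Mstar U) (R.va i₀) := hboth.1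
      have e1 : R.prefH (R.va i₀) (R.vc i₀) = 2 := R.pref_ac i₀
      have e2 : rank R.H R.prefH (R.Mstar U) (R.va i₀) = 1 := R.rk_ay hP hP' hx hy
      omega
  | bc i₀ =>
    exfalso
    have hcase : i₀ = x ∨ i₀ = y := by simpa [pairGadget] using hu
    rcases hcase with rfl|rfl
    · have h1 : R.prefH (R.vc i₀) (R.vb i₀) < rank R.H R.prefH (R.Mstar U) (R.vc i₀) := hboth.2
      have e1 : R.prefH (R.vc i₀) (R.vb i₀) = 2 := R.pref_cb i₀
      have e2 : rank R.H R.prefH (R.Mstar U) (R.vc i₀) = 2 := R.rk_cx hP hP' hx hy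
      omega
    · have h1 : R.prefH (R.vb i₀) (R.vc i₀) < rank R.H R.prefH (R.Mstar U) (R.vb i₀) := hboth.1
      have e1 : R.prefH (R.vb i₀) (R.vc i₀) = (R.G.neighborSet i₀).ncard + 2 := R.pref_bc i₀
      have e2 : rank R.H R.prefH (R.Mstar U) (R.vb i₀) = 1 := R.rk_by hP hP' hx hy
      omega
  | uu h => exact absurd hu (by simp [pairGadget])
  | bu h => exact absurd hv (by simp [pairGadget])
  | @df i₀ j₀ hij =>
    exfalso
    have hcase : (i₀ = x ∧ j₀ = y) ∨ (i₀ = y ∧ j₀ = x) := by simpa [pairGadget] using hv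
    rcases hcase with ⟨rfl, rfl⟩|⟨rfl, rfl⟩
    · have h1 : R.prefH (R.vd i₀) (R.vf i₀ j₀ hij) < rank R.H R.prefH (R.Mstar U) (R.vd i₀) :=
        hboth.1
      have e1 : R.prefH (R.vd i₀) (R.vf i₀ j₀ hij) = 3 := R.pref_df i₀ j₀ hij
      have e2 : rank R.H R.prefH (R.Mstar U) (R.vd i₀) = 1 := R.rk_dx hP hP' hx hy
      omega
    · have h1 : R.prefH (R.vf i₀ j₀ hij) (R.vd i₀) < rank R.H R.prefH (R.Mstar U)
        (R.vf i₀ j₀ hij) := hboth.2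
      have e1 : R.prefH (R.vf i₀ j₀ hij) (R.vd i₀) = 1 := R.pref_fd i₀ j₀ hij
      have e2 : rank R.H R.prefH (R.Mstar U) (R.vf i₀ j₀ hij) = 1 := R.rk_fyx hP hP' hx hy
      omega
  | @fc i₀ j₀ hij =>
    exfalso
    have hcase : (i₀ = x ∧ j₀ = y) ∨ (i₀ = y ∧ j₀ = x) := by simpa [pairGadget] using hu
    rcases hcase with ⟨rfl, rfl⟩|⟨rfl, rfl⟩
    · have h1 : R.prefH (R.vf i₀ j₀ hij) (R.vc j₀) < rank R.H R.prefH (R.Mstar U)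
        (R.vf i₀ j₀ hij) := hboth.1
      have e1 : R.prefH (R.vf i₀ j₀ hij) (R.vc j₀) = 2 := R.pref_fc i₀ j₀ hij
      have e2 : rank R.H R.prefH (R.Mstar U) (R.vf i₀ j₀ hij) = 2 := R.rk_fxy hP hP' hx hy
      omega
    · have h1 : R.prefH (R.vf i₀ j₀ hij) (R.vc j₀) < rank R.H R.prefH (R.Mstar U)
        (R.vf i₀ j₀ hij) := hboth.1
      have e1 : R.prefH (R.vf i₀ j₀ hij) (R.vc j₀) = 2 := R.pref_fc i₀ j₀ hij
      have e2 : rank R.H R.prefH (R.Mstar U) (R.vf i₀ j₀ hij) = 1 := R.rk_fyx hP hP' hx hy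
      omega
  | @cd i₀ j₀ hij =>
    exfalso
    have hcase : i₀ = x ∨ i₀ = y := by simpa [pairGadget] using hu
    have hcase' : j₀ = x ∨ j₀ = y := by simpa [pairGadget] using hv
    rcases hcase with rfl|rfl <;> rcases hcase' with rfl|rfl
    · have hloop := R.ispvc.2.1 hij
      rw [SimpleGraph.mem_edgeSet] at hloop
      exact R.G.loopless.irrefl _ hloop
    · have h1 : R.prefH (R.vc i₀) (R.vd j₀) < rank R.H R.prefH (R.Mstar U) (R.vc i₀) := hboth.1
      have e1 : R.prefH (R.vc i₀) (R.vd j₀) = 4 := R.pref_cd i₀ j₀ hP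
      have e2 : rank R.H R.prefH (R.Mstar U) (R.vc i₀) = 2 := R.rk_cx hP hP' hx hy
      omega
    · have h1 : R.prefH (R.vd j₀) (R.vc i₀) < rank R.H R.prefH (R.Mstar U) (R.vd j₀) := hboth.2
      have e1 : R.prefH (R.vd j₀) (R.vc i₀) = 2 := R.pref_dc j₀ i₀ hP
      have e2 : rank R.H R.prefH (R.Mstar U) (R.vd j₀) = 1 := R.rk_dx hP hP' hx hy
      omega
    · have hloop := R.ispvc.2.1 hij
      rw [SimpleGraph.mem_edgeSet] at hloop
      exact R.G.loopless.irrefl _ hloop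
  | @dd i₀ j₀ t ht hi hj hne =>
    exfalso
    have hcase : i₀ = x ∨ i₀ = y := by simpa [pairGadget] using hu
    rcases hcase with rfl|rfl
    · exact R.excl ht hi (Or.inr hP)
    · exact R.excl ht hi (Or.inl hP)
  | @cc i₀ j₀ t ht hi hj hne =>
    exfalso
    have hcase : i₀ = x ∨ i₀ = y := by simpa [pairGadget] using hu
    rcases hcase with rfl|rfl
    · exact R.excl ht hi (Or.inr hP)
    · exact R.excl ht hi (Or.inl hP)

lemma pair_classify {x y : V} (hP : s(x,y) ∈ R.P) (hP' : s(y,x) ∈ R.P)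
    (hx : x ∉ U) (hy : y ∈ U) {u v : R.HV} (hadj : R.H.Adj u v)
    (hu : u.1 ∈ pairGadget x y) (hv : v.1 ∈ pairGadget x y)
    (hplus : EdgePlus R.prefH (rank R.H R.prefH (R.Mstar U)) s(u,v)) :
    s(u,v) = s(R.va x, R.vb x) ∨ s(u,v) = s(R.va x, R.vc x) := by
  obtain ⟨gu, pu⟩ := u
  obtain ⟨gv, pv⟩ := v
  rcases (show (⟨gu,pu⟩ : R.HV) ≠ ⟨gv,pv⟩ ∧ (HBase R.G R.P R.T gu gv ∨ HBase R.G R.P R.T gv gu)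
    from hadj).2 with hb | hb
  · exact R.pair_classify_base hP hP' hx hy hb hu hv hplus
  · have := R.pair_classify_base hP hP' hx hy hb hv hu (by rwa [Sym2.eq_swap] at hplus)
    rwa [Sym2.eq_swap] at this

end Reduction

namespace Reduction

variable {V : Type u} [LinearOrder V] {R : Reduction V} {U : Set V}

lemma rk_aU {w : V} (hwU : w ∈ U) (hmem : s(R.va w, R.vb w) ∈ R.Mstar U) :
    rank R.H R.prefH (R.Mstar U) (R.va w) = 1 := by
  have := R.rank_eq_of hmem (fun w' hw' => R.u3 hwU hw')
  rw [this]; exact R.pref_ab w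

lemma rk_bU {w : V} (hwU : w ∈ U) (hmem : s(R.va w, R.vb w) ∈ R.Mstar U) :
    rank R.H R.prefH (R.Mstar U) (R.vb w) = 1 := by
  have := R.rank_eq_of (w₀ := R.va w) (by rwa [Sym2.eq_swap] at hmem)
    (fun w' hw' => R.u4 hwU hw')
  rw [this]; exact R.pref_ba w

lemma sorted3 {t : Finset V} (h3 : t.card = 3) :
    ∃ i j k : V, i < j ∧ j < k ∧ t = {i, j, k} := by
  obtain ⟨a, b, c, hab, hac, hbc, rfl⟩ := Finset.card_eq_three.mp h3
  rcases lt_trichotomy a b with h1|h1|h1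
  · rcases lt_trichotomy b c with h2|h2|h2
    · exact ⟨a, b, c, h1, h2, rfl⟩
    · exact absurd h2 hbc
    · rcases lt_trichotomy a c with h3'|h3'|h3'
      · exact ⟨a, c, b, h3', h2, by ext w; simp; tauto⟩
      · exact absurd h3' hac
      · exact ⟨c, a, b, h3', h1, by ext w; simp; tauto⟩
  · exact absurd h1 hab
  · rcases lt_trichotomy a c with h3'|h3'|h3'
    · exact ⟨b, a, c, h1, h3', by ext w; simp; tauto⟩
    · exact absurd h3' hac
    · rcases lt_trichotomy b c with h2|h2|h2
      · exact ⟨b, c, a, h2, h3', by ext w; simp; tauto⟩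
      · exact absurd h2 hbc
      · exact ⟨c, b, a, h2, h1, by ext w; simp; tauto⟩

lemma tri_prefs {t : Finset V} (ht : t ∈ R.T) {i j : V} (hi : i ∈ t) (hj : j ∈ t)
    (hij : i ≠ j) :
    (R.pref (.d i) (.d j) = 2 ∨ R.pref (.d i) (.d j) = 3) ∧
    (R.pref (.c i) (.c j) = 3 ∨ R.pref (.c i) (.c j) = 4) := by
  obtain ⟨p, q, r, hpq, hqr, ht3⟩ := sorted3 (R.ispvc.2.2.2.1 t ht)
  obtain ⟨e1,e2,e3,e4,e5,e6,e7,e8,e9,e10,e11,e12⟩ := R.pref_tri t ht p q r ht3 hpq hqr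
  rw [ht3] at hi hj
  simp only [Finset.mem_insert, Finset.mem_singleton] at hi hj
  have hpq' : p ≠ q := ne_of_lt hpq
  have hqr' : q ≠ r := ne_of_lt hqr
  have hpr' : p ≠ r := ne_of_lt (hpq.trans hqr)
  rcases hi with rfl|rfl|rfl <;> rcases hj with rfl|rfl|rfl <;> simp_all

lemma tri_pref_d_ne {t : Finset V} (ht : t ∈ R.T) {i j k : V} (hi : i ∈ t) (hj : j ∈ t)
    (hk : k ∈ t) (hij : i ≠ j) (hik : i ≠ k) (hjk : j ≠ k) :
    R.pref (.d i) (.d j) ≠ R.pref (.d i) (.d k) := by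
  obtain ⟨p, q, r, hpq, hqr, ht3⟩ := sorted3 (R.ispvc.2.2.2.1 t ht)
  obtain ⟨e1,e2,e3,e4,e5,e6,e7,e8,e9,e10,e11,e12⟩ := R.pref_tri t ht p q r ht3 hpq hqr
  rw [ht3] at hi hj hk
  simp only [Finset.mem_insert, Finset.mem_singleton] at hi hj hk
  have hpq' : p ≠ q := ne_of_lt hpq
  have hqr' : q ≠ r := ne_of_lt hqr
  have hpr' : p ≠ r := ne_of_lt (hpq.trans hqr)
  rcases hi with rfl|rfl|rfl <;> rcases hj with rfl|rfl|rfl <;> rcases hk with rfl|rfl|rfl <;>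
    simp_all

lemma triple_decomp (hU : IsPVCSolution R.G R.P R.T U) {t : Finset V} (ht : t ∈ R.T) :
    ∃ x y z : V, t = {x, y, z} ∧ x ∉ U ∧ y ∈ U ∧ z ∈ U ∧ y ≠ z ∧
      R.pref (.d x) (.d y) < R.pref (.d x) (.d z) := by
  have h3 : t.card = 3 := R.ispvc.2.2.2.1 t ht
  have h2 : {v : V | v ∈ t ∧ v ∈ U}.ncard = 2 := hU.2.2 t ht
  obtain ⟨p, q, hpq, hS⟩ := Set.ncard_eq_two.mp h2
  have hp : p ∈ t ∧ p ∈ U := by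
    have : p ∈ ({p, q} : Set V) := by simp
    rw [← hS] at this; exact this
  have hq : q ∈ t ∧ q ∈ U := by
    have : q ∈ ({p, q} : Set V) := by simp
    rw [← hS] at this; exact this
  obtain ⟨a, b, c, hab, hac, hbc, ht3⟩ := Finset.card_eq_three.mp h3
  have hex : ∃ x ∈ t, x ∉ U := by
    by_contra hcon
    push_neg at hcon
    have hmem : ∀ w, w ∈ t → w = p ∨ w = q := by
      intro w hw
      have : w ∈ ({p, q} : Set V) := by rw [← hS]; exact ⟨hw, hcon w hw⟩
      simpa using this
    have ha' := hmem a (by simp [ht3])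
    have hb' := hmem b (by simp [ht3])
    have hc' := hmem c (by simp [ht3])
    rcases ha' with rfl|rfl <;> rcases hb' with rfl|rfl <;> rcases hc' with rfl|rfl <;>
      simp_all
  obtain ⟨x, hxt, hxU⟩ := hex
  have hxp : x ≠ p := fun h => hxU (h ▸ hp.2)
  have hxq : x ≠ q := fun h => hxU (h ▸ hq.2)
  have hsub : ({x, p, q} : Finset V) ⊆ t := by
    intro w hw
    simp only [Finset.mem_insert, Finset.mem_singleton] at hw
    rcases hw with rfl|rfl|rfl
    · exact hxt
    · exact hp.1
    · exact hq.1
  have hcard : ({x, p, q} : Finset V).card = 3 := by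
    rw [Finset.card_insert_of_notMem (by simp [hxp, hxq]),
      Finset.card_insert_of_notMem (by simp [hpq]), Finset.card_singleton]
  have hteq : t = {x, p, q} := (Finset.eq_of_subset_of_card_le hsub (by omega)).symm
  have hne := R.tri_pref_d_ne ht hxt hp.1 hq.1 hxp hxq hpq
  rcases lt_or_gt_of_ne hne with hlt|hgt
  · exact ⟨x, p, q, hteq, hxU, hp.2, hq.2, hpq, hlt⟩
  · refine ⟨x, q, p, ?_, hxU, hq.2, hp.2, hpq.symm, hgt⟩
    rw [hteq]; ext w; simp; tauto

end Reduction

namespace Reduction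

variable {V : Type u} [LinearOrder V] {R : Reduction V} {U : Set V}

lemma triple_classify_base {t : Finset V} (ht : t ∈ R.T) {x y z : V} (ht2 : t = {x,y,z})
    (hx : x ∉ U) (hy : y ∈ U) (hz : z ∈ U) (hyz : y ≠ z)
    (hord : R.pref (.d x) (.d y) < R.pref (.d x) (.d z))
    {gu gv : Gad V} {pu : Gad.valid R.G R.P gu}
    {pv : Gad.valid R.G R.P gv} (hb : HBase R.G R.P R.T gu gv)
    (hu : gu ∈ tripleGadget t) (hv : gv ∈ tripleGadget t)
    (hplus : EdgePlus R.prefH (rank R.H R.prefH (R.Mstar U)) s(⟨gu,pu⟩,⟨gv,pv⟩)) :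
    s((⟨gu,pu⟩ : R.HV), (⟨gv,pv⟩ : R.HV)) = s(R.va x, R.vb x) ∨
    s((⟨gu,pu⟩ : R.HV), (⟨gv,pv⟩ : R.HV)) = s(R.va x, R.vc x) := by
  have hboth := R.edgePlus_both hplus
  have hm2 := R.m2 ht ht2 hx hy hz hyz hord
  have memx : x ∈ t := by simp [ht2]
  have memy : y ∈ t := by simp [ht2]
  have memz : z ∈ t := by simp [ht2]
  have hUmem : ∀ w : V, w ∈ t → w ∈ U → s(R.va w, R.vb w) ∈ R.Mstar U := by
    intro w hw hwU
    rw [ht2] at hw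
    simp only [Finset.mem_insert, Finset.mem_singleton] at hw
    rcases hw with rfl|rfl|rfl
    · exact absurd hwU hx
    · exact hm2.2.2.1
    · exact hm2.2.2.2.1
  cases hb with
  | da i₀ =>
    exfalso
    have hi₀ : i₀ ∈ t := by simpa [tripleGadget] using hu
    have hcase : i₀ = x ∨ i₀ = y ∨ i₀ = z := by rw [ht2] at hi₀; simpa using hi₀
    rcases hcase with rfl|hc
    · have h1 : R.prefH (R.vd i₀) (R.va i₀) < rank R.H R.prefH (R.Mstar U) (R.vd i₀) := hboth.1
      have e1 : R.prefH (R.vd i₀) (R.va i₀) = 1 := R.pref_da i₀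
      have e2 : rank R.H R.prefH (R.Mstar U) (R.vd i₀) = 1 := R.rk_dx' ht ht2 hx hy hz hyz hord
      omega
    · have hiU : i₀ ∈ U := by rcases hc with rfl|rfl; exacts [hy, hz]
      have h1 : R.prefH (R.va i₀) (R.vd i₀) < rank R.H R.prefH (R.Mstar U) (R.va i₀) := hboth.2
      have e1 : R.prefH (R.va i₀) (R.vd i₀) = 3 := R.pref_ad i₀
      have e2 : rank R.H R.prefH (R.Mstar U) (R.va i₀) = 1 :=
        R.rk_aU hiU (hUmem i₀ hi₀ hiU)
      omega
  | ab i₀ =>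
    have hi₀ : i₀ ∈ t := by simpa [tripleGadget] using hu
    have hcase : i₀ = x ∨ i₀ = y ∨ i₀ = z := by rw [ht2] at hi₀; simpa using hi₀
    rcases hcase with rfl|hc
    · exact Or.inl rfl
    · exfalso
      have hiU : i₀ ∈ U := by rcases hc with rfl|rfl; exacts [hy, hz]
      have h1 : R.prefH (R.va i₀) (R.vb i₀) < rank R.H R.prefH (R.Mstar U) (R.va i₀) := hboth.1
      have e1 : R.prefH (R.va i₀) (R.vb i₀) = 1 := R.pref_ab i₀
      have e2 : rank R.H R.prefH (R.Mstar U) (R.va i₀) = 1 := R.rk_aU hiU (hUmem i₀ hi₀ hiU)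
      omega
  | ac i₀ =>
    have hi₀ : i₀ ∈ t := by simpa [tripleGadget] using hu
    have hcase : i₀ = x ∨ i₀ = y ∨ i₀ = z := by rw [ht2] at hi₀; simpa using hi₀
    rcases hcase with rfl|hc
    · exact Or.inr rfl
    · exfalso
      have hiU : i₀ ∈ U := by rcases hc with rfl|rfl; exacts [hy, hz]
      have h1 : R.prefH (R.va i₀) (R.vc i₀) < rank R.H R.prefH (R.Mstar U) (R.va i₀) := hboth.1
      have e1 : R.prefH (R.va i₀) (R.vc i₀) = 2 := R.pref_ac i₀
      have e2 : rank R.H R.prefH (R.Mstar U) (R.va i₀) = 1 := R.rk_aU hiU (hUmem i₀ hi₀ hiU)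
      omega
  | bc i₀ =>
    exfalso
    have hi₀ : i₀ ∈ t := by simpa [tripleGadget] using hu
    have hcase : i₀ = x ∨ i₀ = y ∨ i₀ = z := by rw [ht2] at hi₀; simpa using hi₀
    rcases hcase with rfl|hc
    · have h1 : R.prefH (R.vc i₀) (R.vb i₀) < rank R.H R.prefH (R.Mstar U) (R.vc i₀) := hboth.2
      have e1 : R.prefH (R.vc i₀) (R.vb i₀) = 2 := R.pref_cb i₀
      have e2 : rank R.H R.prefH (R.Mstar U) (R.vc i₀) = 2 := R.rk_cx' ht ht2 hx hy hz hyz hord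
      omega
    · have hiU : i₀ ∈ U := by rcases hc with rfl|rfl; exacts [hy, hz]
      have hbmem : s(R.vb i₀, R.va i₀) ∈ R.Mstar U := by
        rw [Sym2.eq_swap]; exact hUmem i₀ hi₀ hiU
      have h1 : R.prefH (R.vb i₀) (R.vc i₀) < rank R.H R.prefH (R.Mstar U) (R.vb i₀) := hboth.1
      have e1 : R.prefH (R.vb i₀) (R.vc i₀) = (R.G.neighborSet i₀).ncard + 2 := R.pref_bc i₀
      have e2 : rank R.H R.prefH (R.Mstar U) (R.vb i₀) = 1 := R.rk_bU hiU (hUmem i₀ hi₀ hiU)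
      omega
  | uu h => exact absurd hu (by simp [tripleGadget])
  | bu h => exact absurd hv (by simp [tripleGadget])
  | @df i₀ j₀ hij => exact absurd hv (by simp [tripleGadget])
  | @fc i₀ j₀ hij => exact absurd hu (by simp [tripleGadget])
  | @cd i₀ j₀ hij =>
    exfalso
    have hi₀ : i₀ ∈ t := by simpa [tripleGadget] using hu
    exact R.excl ht hi₀ (Or.inr hij)
  | @dd i₀ j₀ t' ht' hi' hj' hne =>
    exfalso
    have hi₀ : i₀ ∈ t := by simpa [tripleGadget] using hu
    have hj₀ : j₀ ∈ t := by simpa [tripleGadget] using hv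
    have hij : i₀ ≠ j₀ := hne
    have hcase : i₀ = x ∨ i₀ = y ∨ i₀ = z := by rw [ht2] at hi₀; simpa using hi₀
    have hcase' : j₀ = x ∨ j₀ = y ∨ j₀ = z := by rw [ht2] at hj₀; simpa using hj₀
    rcases hcase with rfl|hc
    · have h1 : R.prefH (R.vd i₀) (R.vd j₀) < rank R.H R.prefH (R.Mstar U) (R.vd i₀) := hboth.1
      have e1 := (R.tri_prefs ht hi₀ hj₀ hij).1
      have e2 : rank R.H R.prefH (R.Mstar U) (R.vd i₀) = 1 := R.rk_dx' ht ht2 hx hy hz hyz hord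
      have e1' : R.prefH (R.vd i₀) (R.vd j₀) = R.pref (.d i₀) (.d j₀) := rfl
      omega
    · rcases hcase' with rfl|hc'
      · have h1 : R.prefH (R.vd j₀) (R.vd i₀) < rank R.H R.prefH (R.Mstar U) (R.vd j₀) :=
          hboth.2
        have e1 := (R.tri_prefs ht hj₀ hi₀ hij.symm).1
        have e2 : rank R.H R.prefH (R.Mstar U) (R.vd j₀) = 1 :=
          R.rk_dx' ht ht2 hx hy hz hyz hord
        have e1' : R.prefH (R.vd j₀) (R.vd i₀) = R.pref (.d j₀) (.d i₀) := rfl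
        omega
      · -- both i₀ j₀ in {y,z}
        have hyza : (i₀ = y ∧ j₀ = z) ∨ (i₀ = z ∧ j₀ = y) := by
          rcases hc with rfl|rfl <;> rcases hc' with rfl|rfl <;> tauto
        have e2 : rank R.H R.prefH (R.Mstar U) (R.vd y) = R.pref (.d y) (.d z) :=
          R.rk_dy' ht ht2 hx hy hz hyz hord
        rcases hyza with ⟨rfl, rfl⟩|⟨rfl, rfl⟩
        · have h1 : R.prefH (R.vd i₀) (R.vd j₀) < rank R.H R.prefH (R.Mstar U) (R.vd i₀) :=
            hboth.1
          have e1' : R.prefH (R.vd i₀) (R.vd j₀) = R.pref (.d i₀) (.d j₀) := rfl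
          omega
        · have h1 : R.prefH (R.vd j₀) (R.vd i₀) < rank R.H R.prefH (R.Mstar U) (R.vd j₀) :=
            hboth.2
          have e1' : R.prefH (R.vd j₀) (R.vd i₀) = R.pref (.d j₀) (.d i₀) := rfl
          omega
  | @cc i₀ j₀ t' ht' hi' hj' hne =>
    exfalso
    have hi₀ : i₀ ∈ t := by simpa [tripleGadget] using hu
    have hj₀ : j₀ ∈ t := by simpa [tripleGadget] using hv
    have hij : i₀ ≠ j₀ := hne
    have hcase : i₀ = x ∨ i₀ = y ∨ i₀ = z := by rw [ht2] at hi₀; simpa using hi₀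
    have hcase' : j₀ = x ∨ j₀ = y ∨ j₀ = z := by rw [ht2] at hj₀; simpa using hj₀
    rcases hcase with rfl|hc
    · have h1 : R.prefH (R.vc i₀) (R.vc j₀) < rank R.H R.prefH (R.Mstar U) (R.vc i₀) := hboth.1
      have e1 := (R.tri_prefs ht hi₀ hj₀ hij).2
      have e2 : rank R.H R.prefH (R.Mstar U) (R.vc i₀) = 2 := R.rk_cx' ht ht2 hx hy hz hyz hord
      have e1' : R.prefH (R.vc i₀) (R.vc j₀) = R.pref (.c i₀) (.c j₀) := rfl
      omega
    · rcases hcase' with rfl|hc'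
      · have h1 : R.prefH (R.vc j₀) (R.vc i₀) < rank R.H R.prefH (R.Mstar U) (R.vc j₀) :=
          hboth.2
        have e1 := (R.tri_prefs ht hj₀ hi₀ hij.symm).2
        have e2 : rank R.H R.prefH (R.Mstar U) (R.vc j₀) = 2 :=
          R.rk_cx' ht ht2 hx hy hz hyz hord
        have e1' : R.prefH (R.vc j₀) (R.vc i₀) = R.pref (.c j₀) (.c i₀) := rfl
        omega
      · have hyza : (i₀ = y ∧ j₀ = z) ∨ (i₀ = z ∧ j₀ = y) := by
          rcases hc with rfl|rfl <;> rcases hc' with rfl|rfl <;> tauto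
        have e2 : rank R.H R.prefH (R.Mstar U) (R.vc y) = R.pref (.c y) (.c z) :=
          R.rk_cy' ht ht2 hx hy hz hyz hord
        rcases hyza with ⟨rfl, rfl⟩|⟨rfl, rfl⟩
        · have h1 : R.prefH (R.vc i₀) (R.vc j₀) < rank R.H R.prefH (R.Mstar U) (R.vc i₀) :=
            hboth.1
          have e1' : R.prefH (R.vc i₀) (R.vc j₀) = R.pref (.c i₀) (.c j₀) := rfl
          omega
        · have h1 : R.prefH (R.vc j₀) (R.vc i₀) < rank R.H R.prefH (R.Mstar U) (R.vc j₀) :=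
            hboth.2
          have e1' : R.prefH (R.vc j₀) (R.vc i₀) = R.pref (.c j₀) (.c i₀) := rfl
          omega

lemma triple_classify {t : Finset V} (ht : t ∈ R.T) {x y z : V} (ht2 : t = {x,y,z})
    (hx : x ∉ U) (hy : y ∈ U) (hz : z ∈ U) (hyz : y ≠ z)
    (hord : R.pref (.d x) (.d y) < R.pref (.d x) (.d z))
    {u v : R.HV} (hadj : R.H.Adj u v)
    (hu : u.1 ∈ tripleGadget t) (hv : v.1 ∈ tripleGadget t)
    (hplus : EdgePlus R.prefH (rank R.H R.prefH (R.Mstar U)) s(u,v)) :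
    s(u,v) = s(R.va x, R.vb x) ∨ s(u,v) = s(R.va x, R.vc x) := by
  obtain ⟨gu, pu⟩ := u
  obtain ⟨gv, pv⟩ := v
  rcases (show (⟨gu,pu⟩ : R.HV) ≠ ⟨gv,pv⟩ ∧ (HBase R.G R.P R.T gu gv ∨ HBase R.G R.P R.T gv gu)
    from hadj).2 with hb | hb
  · exact R.triple_classify_base ht ht2 hx hy hz hyz hord hb hu hv hplus
  · have := R.triple_classify_base ht ht2 hx hy hz hyz hord hb hv hu
      (by rwa [Sym2.eq_swap] at hplus)
    rwa [Sym2.eq_swap] at this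

end Reduction

lemma sym2_rep {W : Type u} (e : Sym2 W) : ∃ u v : W, e = s(u,v) := by
  induction e using Sym2.ind with
  | _ u v => exact ⟨u, v, rfl⟩

lemma pairGadget_comm {V : Type u} (i j : V) : pairGadget i j = pairGadget j i := by
  ext g; simp [pairGadget]; tauto

namespace Reduction

variable {V : Type u} [LinearOrder V] {R : Reduction V} {U : Set V}

lemma pair_decomp (hU : IsPVCSolution R.G R.P R.T U) {i j : V} (hij : s(i,j) ∈ R.P) :
    ∃ x y : V, s(x,y) = s(i,j) ∧ x ∉ U ∧ y ∈ U := by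
  have hadj : R.G.Adj i j := (SimpleGraph.mem_edgeSet R.G).mp (R.ispvc.2.1 hij)
  have hne : i ≠ j := hadj.ne
  have h1 : {v : V | v ∈ s(i,j) ∧ v ∈ U}.ncard = 1 := hU.2.1 _ hij
  obtain ⟨p, hS⟩ := Set.ncard_eq_one.mp h1
  have hpS : p ∈ s(i,j) ∧ p ∈ U := by
    have : p ∈ ({p} : Set V) := rfl
    rw [← hS] at this; exact this
  have hpij : p = i ∨ p = j := Sym2.mem_iff.mp hpS.1
  rcases hpij with rfl|rfl
  · refine ⟨j, p, Sym2.eq_swap, fun hjU => hne ?_, hpS.2⟩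
    have : j ∈ {v : V | v ∈ s(p,j) ∧ v ∈ U} := ⟨Sym2.mem_mk_right p j, hjU⟩
    rw [hS] at this
    exact (this : j = p).symm
  · refine ⟨i, p, rfl, fun hiU => hne ?_, hpS.2⟩
    have : i ∈ {v : V | v ∈ s(i,p) ∧ v ∈ U} := ⟨Sym2.mem_mk_left i p, hiU⟩
    rw [hS] at this
    exact (this : i = p)

end Reduction


lemma mem_support_of_mem_edges' {W : Type u} {G : SimpleGraph W} {x y : W} {p : G.Walk x y}
    {e : Sym2 W} {v : W} (h : e ∈ p.edges) (hv : v ∈ e) : v ∈ p.support := by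
  induction e using Sym2.ind with
  | _ a b => rcases Sym2.mem_iff.mp hv with rfl|rfl
             · exact Walk.fst_mem_support_of_mem_edges p h
             · exact Walk.snd_mem_support_of_mem_edges p h

lemma start_edge_head {W : Type u} {G : SimpleGraph W} :
    ∀ {x y : W} (p : G.Walk x y), p.support.Nodup → ∀ {e : Sym2 W}, e ∈ p.edges → x ∈ e →
      p.edges.head? = some e := by
  intro x y p
  induction p with
  | nil => intro _ e he; simp [Walk.edges] at he
  | cons h q ih =>
    intro hnd e he hx
    rw [Walk.edges_cons] at he ⊢
    rcases List.mem_cons.mp he with rfl | he'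
    · rfl
    · exfalso
      rw [Walk.support_cons, List.nodup_cons] at hnd
      exact hnd.1 (mem_support_of_mem_edges' he' hx)

lemma no_two_nonM {W : Type u} {G : SimpleGraph W} (M : Set (Sym2 W)) :
    ∀ {x y : W} (p : G.Walk x y), p.support.Nodup → List.Chain' (altRel M) p.edges →
      ∀ {e e' : Sym2 W}, e ∈ p.edges → e' ∈ p.edges → e ≠ e' → ∀ v, v ∈ e → v ∈ e' →
        e ∉ M → e' ∉ M → False := by
  intro x y p
  induction p with
  | nil => intro _ _ e e' he; simp [Walk.edges] at he
  | @cons a b c h q ih =>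
    intro hnd hch e e' he he' hne v hv hv' hm hm'
    rw [Walk.support_cons, List.nodup_cons] at hnd
    rw [Walk.edges_cons] at he he' hch
    have key : ∀ (f f' : Sym2 W), f = s(a,b) → f' ∈ q.edges → f ≠ f' → v ∈ f → v ∈ f' →
        f ∉ M → f' ∉ M → False := by
      intro f f' hf hf' hne hv hv' hm hm'
      subst hf
      rcases Sym2.mem_iff.mp hv with rfl | rfl
      · exact hnd.1 (mem_support_of_mem_edges' hf' hv')
      · have hh := start_edge_head q hnd.2 hf' hv'
        rcases hq : q.edges with _ | ⟨g, rest⟩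
        · rw [hq] at hh; simp at hh
        · rw [hq] at hh hch
          simp at hh
          subst hh
          rw [List.Chain', List.isChain_cons_cons] at hch
          exact hm (hch.1.mpr hm')
    rcases List.mem_cons.mp he with rfl | he2
    · rcases List.mem_cons.mp he' with rfl | he2'
      · exact hne rfl
      · exact key _ _ rfl he2' hne hv hv' hm hm'
    · rcases List.mem_cons.mp he' with rfl | he2'
      · exact key _ _ rfl he2 hne.symm hv' hv hm' hm
      · exact ih hnd.2 (hch.tail) he2 he2' hne v hv hv' hm hm'

/-- No alternating path in `H_{M*}` contains at least two edges labeled `+2` and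
consists only of edges of a single Pair Selector or Triple Selector gadget. -/
theorem no_bad_alt_path_in_gadgets {V : Type u} [LinearOrder V] (R : Reduction V) (U : Set V)
    (hU : IsPVCSolution R.G R.P R.T U) :
    (∀ e ∈ R.P, ∀ i j : V, e = s(i, j) →
      ¬ ∃ (x y : R.HV) (p : (GMgraph R.H R.prefH (R.Mstar U)).Walk x y),
        IsAltPath (R.Mstar U) p ∧
        TwoPlusEdges R.prefH (rank R.H R.prefH (R.Mstar U)) p.edges ∧
        ∀ v ∈ p.support, v.1 ∈ pairGadget i j) ∧
    (∀ t ∈ R.T,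
      ¬ ∃ (x y : R.HV) (p : (GMgraph R.H R.prefH (R.Mstar U)).Walk x y),
        IsAltPath (R.Mstar U) p ∧
        TwoPlusEdges R.prefH (rank R.H R.prefH (R.Mstar U)) p.edges ∧
        ∀ v ∈ p.support, v.1 ∈ tripleGadget t) := by
  constructor
  · rintro e he i j heq ⟨xx, yy, p, ⟨hpath, hchain, -, -⟩,
      ⟨e1, he1, e2, he2, hne12, hp1, hp2⟩, hsupp⟩
    have hij : s(i,j) ∈ R.P := heq ▸ he
    obtain ⟨x, y, hxy, hx, hy⟩ := Reduction.pair_decomp hU hij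
    have hP : s(x,y) ∈ R.P := hxy ▸ hij
    have hP' : s(y,x) ∈ R.P := by rwa [Sym2.eq_swap]
    have hgad : pairGadget i j = pairGadget x y := by
      rcases Sym2.eq_iff.mp hxy with ⟨rfl, rfl⟩ | ⟨rfl, rfl⟩
      · rfl
      · exact (pairGadget_comm x y).symm
    have classify : ∀ e' ∈ p.edges, EdgePlus R.prefH (rank R.H R.prefH (R.Mstar U)) e' →
        e' = s(R.va x, R.vb x) ∨ e' = s(R.va x, R.vc x) := by
      intro e' he' hp'
      obtain ⟨u1, v1, hrep⟩ := sym2_rep e'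
      have hmem1 : e' ∈ (GMgraph R.H R.prefH (R.Mstar U)).edgeSet :=
        p.edges_subset_edgeSet he'
      rw [hrep] at hmem1
      have hadj1 : (GMgraph R.H R.prefH (R.Mstar U)).Adj u1 v1 :=
        (SimpleGraph.mem_edgeSet _).mp hmem1
      have hu1 : u1.1 ∈ pairGadget x y := by
        rw [← hgad]
        exact hsupp u1 (mem_support_of_mem_edges' he' (hrep ▸ Sym2.mem_mk_left u1 v1))
      have hv1 : v1.1 ∈ pairGadget x y := by
        rw [← hgad]
        exact hsupp v1 (mem_support_of_mem_edges' he' (hrep ▸ Sym2.mem_mk_right u1 v1))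
      have := R.pair_classify hP hP' hx hy (show R.H.Adj u1 v1 ∧ _ from hadj1).1 hu1 hv1 (hrep ▸ hp')
      rw [hrep]; exact this
    have c1 := classify e1 he1 hp1
    have c2 := classify e2 he2 hp2
    have hmem1 : R.va x ∈ e1 := by
      rcases c1 with rfl|rfl <;> exact Sym2.mem_mk_left _ _
    have hmem2 : R.va x ∈ e2 := by
      rcases c2 with rfl|rfl <;> exact Sym2.mem_mk_left _ _
    have hnm1 : e1 ∉ R.Mstar U := by
      rcases c1 with rfl|rfl
      · exact Reduction.ab_not_mem hx
      · exact Reduction.ac_not_mem hx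
    have hnm2 : e2 ∉ R.Mstar U := by
      rcases c2 with rfl|rfl
      · exact Reduction.ab_not_mem hx
      · exact Reduction.ac_not_mem hx
    exact no_two_nonM (R.Mstar U) p hpath.support_nodup hchain he1 he2 hne12
      (R.va x) hmem1 hmem2 hnm1 hnm2
  · rintro t ht ⟨xx, yy, p, ⟨hpath, hchain, -, -⟩,
      ⟨e1, he1, e2, he2, hne12, hp1, hp2⟩, hsupp⟩
    obtain ⟨x, y, z, ht2, hx, hy, hz, hyz, hord⟩ := Reduction.triple_decomp hU ht
    have classify : ∀ e' ∈ p.edges, EdgePlus R.prefH (rank R.H R.prefH (R.Mstar U)) e' →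
        e' = s(R.va x, R.vb x) ∨ e' = s(R.va x, R.vc x) := by
      intro e' he' hp'
      obtain ⟨u1, v1, hrep⟩ := sym2_rep e'
      have hmem1 : e' ∈ (GMgraph R.H R.prefH (R.Mstar U)).edgeSet :=
        p.edges_subset_edgeSet he'
      rw [hrep] at hmem1
      have hadj1 : (GMgraph R.H R.prefH (R.Mstar U)).Adj u1 v1 :=
        (SimpleGraph.mem_edgeSet _).mp hmem1
      have hu1 : u1.1 ∈ tripleGadget t :=
        hsupp u1 (mem_support_of_mem_edges' he' (hrep ▸ Sym2.mem_mk_left u1 v1))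
      have hv1 : v1.1 ∈ tripleGadget t :=
        hsupp v1 (mem_support_of_mem_edges' he' (hrep ▸ Sym2.mem_mk_right u1 v1))
      have := R.triple_classify ht ht2 hx hy hz hyz hord (show R.H.Adj u1 v1 ∧ _ from hadj1).1 hu1 hv1 (hrep ▸ hp')
      rw [hrep]; exact this
    have c1 := classify e1 he1 hp1
    have c2 := classify e2 he2 hp2
    have hmem1 : R.va x ∈ e1 := by
      rcases c1 with rfl|rfl <;> exact Sym2.mem_mk_left _ _
    have hmem2 : R.va x ∈ e2 := by
      rcases c2 with rfl|rfl <;> exact Sym2.mem_mk_left _ _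
    have hnm1 : e1 ∉ R.Mstar U := by
      rcases c1 with rfl|rfl
      · exact Reduction.ab_not_mem hx
      · exact Reduction.ac_not_mem hx
    have hnm2 : e2 ∉ R.Mstar U := by
      rcases c2 with rfl|rfl
      · exact Reduction.ab_not_mem hx
      · exact Reduction.ac_not_mem hx
    exact no_two_nonM (R.Mstar U) p hpath.support_nodup hchain he1 he2 hne12
      (R.va x) hmem1 hmem2 hnm1 hnm2
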